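/- Let G be a connected graph containing neither K_5 nor K_{3,3} as an immersion, and let F be a minimal internal i-edge cut in G for some i ∈ {1,2,3}. Then both connected components of the F-split G|_F contain neither K_5 nor K_{3,3} as an immersion. -/

import Mathlib

attribute [local instance] Classical.propDecidable

set_option autoImplicit false

noncomputable section

/-- A finite undirected loopless multigraph: a finite type of vertices, a finite type of
edges, and a map assigning to every edge its (unordered) pair of distinct endpoints. -/
structure Multigraph : Type 1 where
  V : Type
  E : Type
  finV : Finite V
  finE : Finite E
  ends : E → Sym2 V
  loopless : ∀ e, ¬ (ends e).IsDiag

attribute [instance] Multigraph.finV Multigraph.finE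

namespace Multigraph

variable {G : Multigraph}

/-- Walks in a multigraph, recorded together with their two endpoints. -/
inductive Walk (G : Multigraph) : G.V → G.V → Type where
  | nil {v : G.V} : Walk G v v
  | cons {u v w : G.V} (e : G.E) (h : G.ends e = s(u, v)) (t : Walk G v w) : Walk G u w

namespace Walk

/-- The list of edges traversed by a walk. -/
def edges : ∀ {u v : G.V}, G.Walk u v → List G.E
  | _, _, nil => []
  | _, _, cons e _ t => e :: t.edges

/-- The list of vertices visited by a walk (in order). -/
def support : ∀ {u v : G.V}, G.Walk u v → List G.V
  | u, _, nil => [u]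
  | u, _, cons _ _ t => u :: t.support

/-- Concatenation of walks. -/
def append : ∀ {u v w : G.V}, G.Walk u v → G.Walk v w → G.Walk u w
  | _, _, _, nil, q => q
  | _, _, _, cons e h t, q => cons e h (t.append q)

/-- Reversal of a walk. -/
def reverse : ∀ {u v : G.V}, G.Walk u v → G.Walk v u
  | _, _, nil => nil
  | _, _, cons e h t => t.reverse.append (cons e (by rw [h]; exact Sym2.eq_swap) nil)

/-- A walk is a path if it visits no vertex twice.  (A single vertex is a trivial path.) -/
def IsPath {u v : G.V} (w : G.Walk u v) : Prop := w.support.Nodup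

/-- A closed walk is a cycle if it uses at least one edge, repeats no edge, and repeats
no vertex except that it ends where it started. -/
def IsCycle {v : G.V} (w : G.Walk v v) : Prop :=
  w.edges ≠ [] ∧ w.edges.Nodup ∧ w.support.tail.Nodup

/-- The set of edges of a walk. -/
def edgeSet {u v : G.V} (w : G.Walk u v) : Set G.E := {e | e ∈ w.edges}

/-- The set of vertices of a walk. -/
def supportSet {u v : G.V} (w : G.Walk u v) : Set G.V := {x | x ∈ w.support}

end Walk

/-- Two walks are edge-disjoint if they share no edge. -/
def EdgeDisjoint {u v u' v' : G.V} (p : G.Walk u v) (q : G.Walk u' v') : Prop :=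
  ∀ e : G.E, e ∈ p.edges → e ∉ q.edges

/-- Two vertices are reachable from one another if some walk joins them. -/
def Reachable (G : Multigraph) (u v : G.V) : Prop := Nonempty (G.Walk u v)

/-- Reachability is an equivalence relation. -/
def reachSetoid (G : Multigraph) : Setoid G.V :=
  ⟨G.Reachable,
    ⟨fun _ => ⟨Walk.nil⟩, fun ⟨w⟩ => ⟨w.reverse⟩, fun ⟨w⟩ ⟨w'⟩ => ⟨w.append w'⟩⟩⟩

/-- A multigraph is connected if every two vertices are joined by a walk. -/
def Connected (G : Multigraph) : Prop := ∀ u v : G.V, G.Reachable u v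

/-- The number of connected components. -/
def numComponents (G : Multigraph) : ℕ := Nat.card (Quotient G.reachSetoid)

/-- A set of vertices is connected in `G` if any two of its vertices are joined by a
walk staying inside the set. -/
def ConnectedIn (G : Multigraph) (S : Set G.V) : Prop :=
  ∀ u ∈ S, ∀ v ∈ S, ∃ w : G.Walk u v, ∀ x ∈ w.support, x ∈ S

/-- Reachability inside a prescribed set of vertices, using only a prescribed
set of edges. -/
def ReachableWithin (G : Multigraph) (W : Set G.V) (E₀ : Set G.E) (u v : G.V) : Prop :=
  ∃ w : G.Walk u v, (∀ x ∈ w.support, x ∈ W) ∧ ∀ e ∈ w.edges, e ∈ E₀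

/-- The degree of a vertex: the number of edges incident to it. -/
def degree (G : Multigraph) (v : G.V) : ℕ := Nat.card {e : G.E // v ∈ G.ends e}

/-- A multigraph is sub-cubic if all its vertices have degree at most `3`. -/
def SubCubic (G : Multigraph) : Prop := ∀ v : G.V, G.degree v ≤ 3

/-- Deletion of a set of edges. -/
def deleteEdges (G : Multigraph) (F : Set G.E) : Multigraph where
  V := G.V
  E := {e : G.E // e ∉ F}
  finV := G.finV
  finE := inferInstance
  ends := fun e => G.ends e.1
  loopless := fun e => G.loopless e.1

/-- An edge cut: a non-empty set of edges, all lying in one connected component,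
whose deletion increases the number of connected components. -/
def IsEdgeCut (G : Multigraph) (F : Set G.E) : Prop :=
  F.Nonempty ∧
  (∀ e ∈ F, ∀ e' ∈ F, ∀ u v : G.V, u ∈ G.ends e → v ∈ G.ends e' → G.Reachable u v) ∧
  G.numComponents < (G.deleteEdges F).numComponents

/-- A minimal edge cut: its deletion produces exactly one more connected component. -/
def IsMinimalEdgeCut (G : Multigraph) (F : Set G.E) : Prop :=
  G.IsEdgeCut F ∧ (G.deleteEdges F).numComponents = G.numComponents + 1

/-- An internal edge cut: a minimal edge cut such that both connected components into
which the component of `G` containing the cut is split have at least `2` vertices.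
(Equivalently: every vertex of the component of `G` containing the cut lies, after
deletion of the cut, in a component with at least `2` vertices.) -/
def IsInternalEdgeCut (G : Multigraph) (F : Set G.E) : Prop :=
  G.IsMinimalEdgeCut F ∧
  ∀ v : G.V, (∃ e ∈ F, ∃ u ∈ G.ends e, G.Reachable v u) →
    2 ≤ Nat.card {u : G.V | (G.deleteEdges F).Reachable u v}

/-- `H` is immersed in `G`: there is an injection `f` of the vertices of `H` into the
vertices of `G`, and for every edge `{u,v}` of `H` a path in `G` from `f u` to `f v`,
these paths being pairwise edge-disjoint. -/
def Immersion (H G : Multigraph) : Prop :=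
  ∃ f : H.V → G.V, Function.Injective f ∧
    ∃ P : H.E → Σ a : G.V, Σ b : G.V, G.Walk a b,
      (∀ e : H.E, (P e).2.2.IsPath) ∧
      (∀ e : H.E, (H.ends e).map f = s((P e).1, (P e).2.1)) ∧
      ∀ e e' : H.E, e ≠ e' → EdgeDisjoint (P e).2.2 (P e').2.2

/-- The complete graph on five vertices. -/
def K5 : Multigraph where
  V := Fin 5
  E := {p : Sym2 (Fin 5) // ¬ p.IsDiag}
  finV := inferInstance
  finE := inferInstance
  ends := fun e => e.1
  loopless := fun e => e.2

/-- The complete bipartite graph with two parts of three vertices. -/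
def K33 : Multigraph where
  V := Fin 3 ⊕ Fin 3
  E := Fin 3 × Fin 3
  finV := inferInstance
  finE := inferInstance
  ends := fun p => s(Sum.inl p.1, Sum.inr p.2)
  loopless := fun p h => by
    rw [Sym2.mk_isDiag_iff] at h
    cases h

private lemma contract_key {α : Type} (S : Set α) (z : Sym2 α) :
    ¬ z.IsDiag → (¬ ∀ v ∈ z, v ∈ S) →
    ¬ (z.map fun v =>
        if h : v ∈ S then (Sum.inr () : {v : α // v ∉ S} ⊕ Unit) else Sum.inl ⟨v, h⟩).IsDiag := by
  induction z using Sym2.ind with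
  | _ a b =>
    intro hdiag hS h
    rw [Sym2.map_pair_eq, Sym2.mk_isDiag_iff] at h
    by_cases ha : a ∈ S <;> by_cases hb : b ∈ S
    · exact hS fun v hv => by rcases Sym2.mem_iff.mp hv with rfl | rfl <;> assumption
    · rw [dif_pos ha, dif_neg hb] at h
      cases h
    · rw [dif_neg ha, dif_pos hb] at h
      cases h
    · rw [dif_neg ha, dif_neg hb] at h
      injection h with h'
      exact hdiag (Sym2.mk_isDiag_iff.mpr (congrArg Subtype.val h'))

/-- Contraction of a set `S` of vertices of `G` to a single new vertex: edges lying
entirely inside `S` disappear, edges meeting `S` are redirected to the new vertex.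
(When `S` induces a connected subgraph this is the result of contracting all its edges.) -/
def contractSet (G : Multigraph) (S : Set G.V) : Multigraph where
  V := {v : G.V // v ∉ S} ⊕ Unit
  E := {e : G.E // ¬ ∀ v ∈ G.ends e, v ∈ S}
  finV := inferInstance
  finE := inferInstance
  ends := fun e => (G.ends e.1).map fun v =>
    if h : v ∈ S then Sum.inr () else Sum.inl ⟨v, h⟩
  loopless := fun e => contract_key S (G.ends e.1) (G.loopless e.1) e.2

/-- The graph obtained from `G` by subdividing every edge exactly once: each edge `e`
is replaced by a new vertex joined to the two endpoints of `e`. -/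
def subdivision (G : Multigraph) : Multigraph where
  V := G.V ⊕ G.E
  E := Σ e : G.E, {v : G.V // v ∈ G.ends e}
  finV := inferInstance
  finE := inferInstance
  ends := fun p => s(Sum.inl p.2.1, Sum.inr p.1)
  loopless := fun p h => by
    rw [Sym2.mk_isDiag_iff] at h
    cases h

/-- The multigraph associated with a simple graph. -/
def ofSimpleGraph {α : Type} [Finite α] (H : SimpleGraph α) : Multigraph where
  V := α
  E := {p : Sym2 α // p ∈ H.edgeSet}
  finV := ‹Finite α›
  finE := inferInstance
  ends := fun e => e.1
  loopless := fun e => H.not_isDiag_of_mem_edgeSet e.2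

/-- The `(r,q)`-cylinder: the cartesian product of a cycle on `r` vertices and a path
on `q` vertices. -/
def cylinder (r q : ℕ) : Multigraph :=
  ofSimpleGraph ((SimpleGraph.cycleGraph r).boxProd (SimpleGraph.pathGraph q))

/-- `H` is a minor of `G`: there are pairwise disjoint nonempty connected branch sets
`β u ⊆ V(G)`, one for every vertex `u` of `H`, and an injection `φ` of the edges of `H`
into the edges of `G` such that the edge `φ e` joins the branch sets of the two
endpoints of `e`. -/
def IsMinor (H G : Multigraph) : Prop :=
  ∃ β : H.V → Set G.V, ∃ φ : H.E → G.E,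
    Function.Injective φ ∧
    (∀ u : H.V, (β u).Nonempty) ∧
    (∀ u : H.V, G.ConnectedIn (β u)) ∧
    (∀ u v : H.V, u ≠ v → Disjoint (β u) (β v)) ∧
    ∀ (e : H.E) (u v : H.V), H.ends e = s(u, v) →
      ∃ x y : G.V, G.ends (φ e) = s(x, y) ∧ x ∈ β u ∧ y ∈ β v

/-- The degree of a vertex of a simple graph (number of neighbours). -/
def simpleDegree {n : ℕ} (T : SimpleGraph (Fin n)) (v : Fin n) : ℕ :=
  Nat.card {u : Fin n // T.Adj v u}

/-- A branch decomposition of `G`: a ternary tree `T` together with a bijection between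
the edges of `G` and the leaves of `T`. -/
structure BranchDecomposition (G : Multigraph) where
  n : ℕ
  T : SimpleGraph (Fin n)
  acyclic : T.IsAcyclic
  preconnected : T.Preconnected
  ternary : ∀ v : Fin n, simpleDegree T v ≤ 1 ∨ simpleDegree T v = 3
  leafEquiv : G.E ≃ {v : Fin n // simpleDegree T v ≤ 1}

/-- For an edge `{a,b}` of the tree of a branch decomposition, the number of vertices of
`G` incident both with an edge mapped to a leaf on the side of `a` and with an edge
mapped to a leaf on the side of `b` (sides taken in `T` minus the edge `{a,b}`). -/
def BranchDecomposition.sigmaWidth {G : Multigraph} (B : BranchDecomposition G)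
    (a b : Fin B.n) : ℕ :=
  Nat.card {x : G.V | ∃ e₁ e₂ : G.E, x ∈ G.ends e₁ ∧ x ∈ G.ends e₂ ∧
    (B.T.deleteEdges {s(a, b)}).Reachable (B.leafEquiv e₁).1 a ∧
    (B.T.deleteEdges {s(a, b)}).Reachable (B.leafEquiv e₂).1 b}

/-- The width of a branch decomposition. -/
def BranchDecomposition.width {G : Multigraph} (B : BranchDecomposition G) : ℕ :=
  sSup {w : ℕ | ∃ a b : Fin B.n, B.T.Adj a b ∧ w = B.sigmaWidth a b}

/-- The branch-width of `G`: the minimum width of a branch decomposition of `G`. -/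
def branchwidth (G : Multigraph) : ℕ :=
  sInf {w : ℕ | ∃ B : BranchDecomposition G, B.width = w}

/-- A (topological) embedding of the multigraph `G` in the space `X`: vertices become
distinct points, edges become arcs joining the images of their endpoints, arcs meet
vertex images only at their endpoints and meet each other only at images of vertices. -/
structure EmbeddingIn (G : Multigraph) (X : Type) [TopologicalSpace X] where
  vmap : G.V → X
  emap : G.E → unitInterval → X
  vmap_inj : Function.Injective vmap
  emap_cont : ∀ e, Continuous (emap e)
  emap_inj : ∀ e, Function.Injective (emap e)
  emap_ends : ∀ e, (G.ends e).map vmap = s(emap e 0, emap e 1)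
  emap_vertex : ∀ e t, emap e t ∈ Set.range vmap → t = 0 ∨ t = 1
  emap_disjoint : ∀ e e', e ≠ e' → ∀ t t', emap e t = emap e' t' →
    emap e t ∈ Set.range vmap

variable {X : Type} [TopologicalSpace X]

/-- The set of points of `X` occupied by the embedded graph. -/
def EmbeddingIn.carrier (emb : EmbeddingIn G X) : Set X :=
  Set.range emb.vmap ∪ ⋃ e : G.E, Set.range (emb.emap e)

/-- The set of points of `X` occupied by an embedded walk. -/
def EmbeddingIn.walkImage (emb : EmbeddingIn G X) {u v : G.V} (w : G.Walk u v) : Set X :=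
  (emb.vmap '' w.supportSet) ∪ ⋃ e ∈ w.edges, Set.range (emb.emap e)

/-- An open disk in `X`: an open set homeomorphic to an open disk of the plane. -/
def IsOpenDisk (U : Set X) : Prop :=
  IsOpen U ∧ Nonempty (↥U ≃ₜ ↥(Metric.ball (0 : EuclideanSpace ℝ (Fin 2)) 1))

/-- A disk around the vertex `x`: an open disk containing (the image of) `x` all of
whose points on the graph are `x` itself or lie on edges incident with `x`. -/
def EmbeddingIn.IsDiskAround (emb : EmbeddingIn G X) (x : G.V) (Δ : Set X) : Prop :=
  IsOpenDisk Δ ∧ emb.vmap x ∈ Δ ∧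
  ∀ p ∈ Δ ∩ emb.carrier,
    p = emb.vmap x ∨ ∃ e : G.E, x ∈ G.ends e ∧ p ∈ Set.range (emb.emap e)

/-- Two edge-disjoint walks are confluent if for every common vertex `x` that is not an
endpoint of either of them and every disk `Δ` around `x`, one of the connected
components of `Δ` minus the first walk contains no point of the second walk. -/
def Confluent (emb : EmbeddingIn G X) {u₁ w₁ u₂ w₂ : G.V}
    (P₁ : G.Walk u₁ w₁) (P₂ : G.Walk u₂ w₂) : Prop :=
  ∀ x : G.V, x ∈ P₁.support → x ∈ P₂.support →
    x ≠ u₁ → x ≠ w₁ → x ≠ u₂ → x ≠ w₂ →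
    ∀ Δ : Set X, emb.IsDiskAround x Δ →
      ∃ p ∈ Δ \ emb.walkImage P₁,
        connectedComponentIn (Δ \ emb.walkImage P₁) p ∩ emb.walkImage P₂ = ∅

/-- `x` is an overlapping vertex of `P₁` and `P₂`: a common vertex, not an endpoint of
either walk, such that for some disk `Δ` around `x` both connected components of `Δ`
minus `P₁` contain points of `P₂`. -/
def OverlapVertex (emb : EmbeddingIn G X) (x : G.V) {u₁ w₁ u₂ w₂ : G.V}
    (P₁ : G.Walk u₁ w₁) (P₂ : G.Walk u₂ w₂) : Prop :=
  x ∈ P₁.support ∧ x ∈ P₂.support ∧ x ≠ u₁ ∧ x ≠ w₁ ∧ x ≠ u₂ ∧ x ≠ w₂ ∧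
  ∃ Δ : Set X, emb.IsDiskAround x Δ ∧
    ∀ p ∈ Δ \ emb.walkImage P₁,
      (connectedComponentIn (Δ \ emb.walkImage P₁) p ∩ emb.walkImage P₂).Nonempty

/-- Two walks with the same first vertex are well-arranged if their common vertices
appear in the same order in both. -/
def WellArranged {u v₁ v₂ : G.V} (P₁ : G.Walk u v₁) (P₂ : G.Walk u v₂) : Prop :=
  P₁.support.filter (fun x => decide (x ∈ P₂.support)) =
    P₂.support.filter (fun x => decide (x ∈ P₁.support))

/-- `f_𝒫(x)`: the number of pairs of walks of the collection `P` for which `x` is an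
overlapping vertex. -/
def overlapCount (emb : EmbeddingIn G X) {r : ℕ} {v : G.V} {vs : Fin r → G.V}
    (P : (i : Fin r) → G.Walk v (vs i)) (x : G.V) : ℕ :=
  Nat.card {p : Fin r × Fin r // p.1 < p.2 ∧
    (OverlapVertex emb x (P p.1) (P p.2) ∨ OverlapVertex emb x (P p.2) (P p.1))}

/-- `g(𝒫)`: the sum over all vertices `x` of `f_𝒫(x)`. -/
def gFun (emb : EmbeddingIn G X) {r : ℕ} {v : G.V} {vs : Fin r → G.V}
    (P : (i : Fin r) → G.Walk v (vs i)) : ℕ :=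
  ∑ᶠ x : G.V, overlapCount emb P x

/-- The 2-dimensional sphere. -/
abbrev Sphere2 : Type := ↥(Metric.sphere (0 : EuclideanSpace ℝ (Fin 3)) 1)

/-- A multigraph is planar if it embeds in the sphere. -/
def Planar (G : Multigraph) : Prop := Nonempty (EmbeddingIn G Sphere2)

/-- The annulus between two disjoint cycles with point sets `K₁`, `K₂` on the sphere:
the complement of the two open disks `Δᵢ` bounded by `Kᵢ` containing no point of the
other cycle. -/
def annulusBetween (K₁ K₂ : Set Sphere2) : Set Sphere2 :=
  ({x : Sphere2 | x ∉ K₁ ∧ connectedComponentIn K₁ᶜ x ∩ K₂ = ∅} ∪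
   {x : Sphere2 | x ∉ K₂ ∧ connectedComponentIn K₂ᶜ x ∩ K₁ = ∅})ᶜ

/-- A collection of `r` pairwise disjoint cycles embedded in the sphere is nested if
consecutive annuli between them compose. -/
def NestedCycles (emb : EmbeddingIn G Sphere2) (r : ℕ) (c : Fin r → G.V)
    (C : (i : Fin r) → G.Walk (c i) (c i)) : Prop :=
  (∀ i, (C i).IsCycle) ∧
  (∀ i j : Fin r, i ≠ j → ∀ x, x ∈ (C i).support → x ∉ (C j).support) ∧
  ∀ (i : Fin r) (h2 : i.1 + 2 < r),
    annulusBetween (emb.walkImage (C i)) (emb.walkImage (C ⟨i.1 + 1, by omega⟩)) ∪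
      annulusBetween (emb.walkImage (C ⟨i.1 + 1, by omega⟩))
        (emb.walkImage (C ⟨i.1 + 2, h2⟩)) =
    annulusBetween (emb.walkImage (C i)) (emb.walkImage (C ⟨i.1 + 2, h2⟩))

/-- The intersection of the walks `P` and `C` is a (possibly trivial) path: the common
vertices and common edges of `P` and `C` are exactly those of some path, in particular
`P` meets `C`. -/
def IsPathIntersection (G : Multigraph) {a b c d : G.V}
    (P : G.Walk a b) (C : G.Walk c d) : Prop :=
  ∃ (x y : G.V) (Q : G.Walk x y), Q.IsPath ∧
    Q.supportSet = P.supportSet ∩ C.supportSet ∧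
    Q.edgeSet = P.edgeSet ∩ C.edgeSet

/-- `G`, embedded in the sphere by `emb`, contains an `(r,q)`-railed annulus: `r` nested
pairwise disjoint cycles all met by `q` paths (rails), the intersection of each rail
with each cycle being a (possibly trivial) path. -/
def HasRailedAnnulus (G : Multigraph) (emb : EmbeddingIn G Sphere2) (r q : ℕ) : Prop :=
  ∃ (c : Fin r → G.V) (C : (i : Fin r) → G.Walk (c i) (c i)),
    NestedCycles emb r c C ∧
    ∃ (a b : Fin q → G.V) (P : (j : Fin q) → G.Walk (a j) (b j)),
      (∀ j, (P j).IsPath) ∧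
      ∀ (i : Fin r) (j : Fin q), IsPathIntersection G (P j) (C i)

/-- `G` is a `k`-edge-sum of `G₁` and `G₂`: there are vertices `v₁` of `G₁` and `v₂` of
`G₂`, both of degree `k`, and a bijection `σ` between the edges at `v₁` and the edges at
`v₂`, such that `G` is obtained from the disjoint union of `G₁` and `G₂` by deleting
`v₁` and `v₂` and lifting every pair `e`, `σ e` to a single new edge. -/
def IsEdgeSum (G G₁ G₂ : Multigraph) (k : ℕ) : Prop :=
  ∃ (v₁ : G₁.V) (v₂ : G₂.V),
    G₁.degree v₁ = k ∧ G₂.degree v₂ = k ∧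
    ∃ (σ : {e : G₁.E // v₁ ∈ G₁.ends e} ≃ {e : G₂.E // v₂ ∈ G₂.ends e})
      (fV : ({u : G₁.V // u ≠ v₁} ⊕ {u : G₂.V // u ≠ v₂}) ≃ G.V)
      (fE : ({e : G₁.E // v₁ ∉ G₁.ends e} ⊕ {e : G₂.E // v₂ ∉ G₂.ends e} ⊕
        {e : G₁.E // v₁ ∈ G₁.ends e}) ≃ G.E),
      (∀ (e : G₁.E) (he : v₁ ∉ G₁.ends e) (a b : G₁.V), G₁.ends e = s(a, b) →
        ∃ (ha : a ≠ v₁) (hb : b ≠ v₁),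
          G.ends (fE (Sum.inl ⟨e, he⟩)) = s(fV (Sum.inl ⟨a, ha⟩), fV (Sum.inl ⟨b, hb⟩))) ∧
      (∀ (e : G₂.E) (he : v₂ ∉ G₂.ends e) (a b : G₂.V), G₂.ends e = s(a, b) →
        ∃ (ha : a ≠ v₂) (hb : b ≠ v₂),
          G.ends (fE (Sum.inr (Sum.inl ⟨e, he⟩))) =
            s(fV (Sum.inr ⟨a, ha⟩), fV (Sum.inr ⟨b, hb⟩))) ∧
      ∀ (e : {e : G₁.E // v₁ ∈ G₁.ends e}) (a : G₁.V) (b : G₂.V),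
        G₁.ends e.1 = s(v₁, a) → G₂.ends (σ e).1 = s(v₂, b) →
        ∃ (ha : a ≠ v₁) (hb : b ≠ v₂),
          G.ends (fE (Sum.inr (Sum.inr e))) =
            s(fV (Sum.inl ⟨a, ha⟩), fV (Sum.inr ⟨b, hb⟩))

/-- `G` can be constructed by applying consecutive `i`-edge-sums, for `i ≤ 3`,
starting from graphs satisfying the predicate `base`. -/
inductive ConstructibleFrom (base : Multigraph → Prop) : Multigraph → Prop where
  | base (G : Multigraph) : base G → ConstructibleFrom base G
  | edgeSum (G G₁ G₂ : Multigraph) (k : ℕ) (hk : k ≤ 3) :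
      ConstructibleFrom base G₁ → ConstructibleFrom base G₂ →
      IsEdgeSum G G₁ G₂ k → ConstructibleFrom base G

end Multigraph

namespace Multigraph

variable {G : Multigraph}

private lemma sym2_exists {α : Type} (z : Sym2 α) : ∃ a b, z = s(a, b) := by
  induction z using Sym2.ind with
  | _ a b => exact ⟨a, b, rfl⟩

namespace Walk

lemma start_mem_support : ∀ {u v : G.V} (w : G.Walk u v), u ∈ w.support
  | _, _, nil => List.mem_singleton.mpr rfl
  | _, _, cons _ _ _ => List.mem_cons_self

lemma end_mem_support : ∀ {u v : G.V} (w : G.Walk u v), v ∈ w.support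
  | _, _, nil => List.mem_singleton.mpr rfl
  | _, _, cons _ _ t => List.mem_cons_of_mem _ (end_mem_support t)

lemma mem_support_of_mem_edges : ∀ {u v : G.V} (w : G.Walk u v) (e : G.E),
    e ∈ w.edges → ∀ x ∈ G.ends e, x ∈ w.support
  | _, _, nil, e, he => by simp [edges] at he
  | u, v, cons e' h t, e, he => by
    intro x hx
    rcases List.mem_cons.mp he with rfl | he'
    · rw [h] at hx
      rcases Sym2.mem_iff.mp hx with rfl | rfl
      · exact List.mem_cons_self
      · exact List.mem_cons_of_mem _ t.start_mem_support
    · exact List.mem_cons_of_mem _ (mem_support_of_mem_edges t e he' x hx)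

lemma edges_append : ∀ {u v w : G.V} (p : G.Walk u v) (q : G.Walk v w),
    (p.append q).edges = p.edges ++ q.edges
  | _, _, _, nil, q => rfl
  | _, _, _, cons e h t, q => by
    show e :: (t.append q).edges = (e :: t.edges) ++ q.edges
    rw [edges_append t q]; rfl

lemma mem_support_append : ∀ {u v w : G.V} (p : G.Walk u v) (q : G.Walk v w) (x : G.V),
    x ∈ (p.append q).support → x ∈ p.support ∨ x ∈ q.support
  | _, _, _, nil, q, x, hx => Or.inr hx
  | _, _, _, cons e h t, q, x, hx => by
    rcases List.mem_cons.mp hx with rfl | hx'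
    · exact Or.inl (List.mem_cons_self)
    · rcases mem_support_append t q x hx' with h1 | h1
      · exact Or.inl (List.mem_cons_of_mem _ h1)
      · exact Or.inr h1

lemma edges_reverse : ∀ {u v : G.V} (p : G.Walk u v), p.reverse.edges = p.edges.reverse
  | _, _, nil => rfl
  | _, _, cons e h t => by
    show (t.reverse.append (cons e _ nil)).edges = (e :: t.edges).reverse
    rw [edges_append, edges_reverse t, List.reverse_cons]
    rfl

lemma mem_support_reverse : ∀ {u v : G.V} (p : G.Walk u v) (x : G.V),
    x ∈ p.reverse.support → x ∈ p.support
  | _, _, nil, x, hx => hx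
  | _, _, cons e h t, x, hx => by
    rcases mem_support_append t.reverse _ x hx with h1 | h1
    · exact List.mem_cons_of_mem _ (mem_support_reverse t x h1)
    · rcases List.mem_cons.mp h1 with rfl | h1
      · exact List.mem_cons_of_mem _ t.start_mem_support
      · rcases List.mem_singleton.mp h1 with rfl
        exact List.mem_cons_self

/-- Transport a walk along equalities of its endpoints. -/
def copy {u v u' v' : G.V} (p : G.Walk u v) (hu : u = u') (hv : v = v') : G.Walk u' v' :=
  match u', v', hu, hv with
  | _, _, rfl, rfl => p

lemma copy_edges {u v u' v' : G.V} (p : G.Walk u v) (hu : u = u') (hv : v = v') :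
    (p.copy hu hv).edges = p.edges := by
  subst hu; subst hv; rfl

lemma copy_support {u v u' v' : G.V} (p : G.Walk u v) (hu : u = u') (hv : v = v') :
    (p.copy hu hv).support = p.support := by
  subst hu; subst hv; rfl

lemma exists_suffix : ∀ {a b : G.V} (p : G.Walk a b) (u : G.V), u ∈ p.support →
    ∃ q : G.Walk u b, (∀ e ∈ q.edges, e ∈ p.edges) ∧ (∀ x ∈ q.support, x ∈ p.support) ∧
      (p.support.Nodup → q.support.Nodup)
  | _, _, nil, u, hu => by
    rcases List.mem_singleton.mp hu with rfl
    exact ⟨nil, fun _ he => he, fun _ hx => hx, fun h => h⟩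
  | _, _, cons e h t, u, hu => by
    rcases List.mem_cons.mp hu with rfl | hu'
    · exact ⟨cons e h t, fun _ he => he, fun _ hx => hx, fun h => h⟩
    · obtain ⟨q, hq1, hq2, hq3⟩ := exists_suffix t u hu'
      exact ⟨q, fun e' he => List.mem_cons_of_mem _ (hq1 e' he),
        fun x hx => List.mem_cons_of_mem _ (hq2 x hx),
        fun hnd => hq3 (List.Nodup.of_cons hnd)⟩

lemma exists_path : ∀ {a b : G.V} (p : G.Walk a b),
    ∃ q : G.Walk a b, q.IsPath ∧ (∀ e ∈ q.edges, e ∈ p.edges) ∧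
      (∀ x ∈ q.support, x ∈ p.support)
  | _, _, nil => ⟨nil, List.nodup_singleton _, fun _ he => he, fun _ hx => hx⟩
  | a, _, cons e h t => by
    obtain ⟨q, hq, hqe, hqs⟩ := exists_path t
    by_cases ha : a ∈ q.support
    · obtain ⟨r, hr1, hr2, hr3⟩ := q.exists_suffix a ha
      exact ⟨r, hr3 hq, fun e' he' => List.mem_cons_of_mem _ (hqe _ (hr1 _ he')),
        fun x hx => List.mem_cons_of_mem _ (hqs _ (hr2 _ hx))⟩
    · refine ⟨cons e h q, ?_, ?_, ?_⟩
      · exact List.nodup_cons.mpr ⟨ha, hq⟩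
      · intro e' he'
        rcases List.mem_cons.mp he' with rfl | he'
        · exact List.mem_cons_self
        · exact List.mem_cons_of_mem _ (hqe _ he')
      · intro x hx
        rcases List.mem_cons.mp hx with rfl | hx
        · exact List.mem_cons_self
        · exact List.mem_cons_of_mem _ (hqs _ hx)

lemma exists_split : ∀ {a b : G.V} (p : G.Walk a b), p.IsPath → ∀ u, u ∈ p.support →
    ∃ (p₁ : G.Walk a u) (p₂ : G.Walk u b),
      (∀ e ∈ p₁.edges, e ∈ p.edges) ∧ (∀ e ∈ p₂.edges, e ∈ p.edges) ∧
      (∀ x ∈ p₁.support, x ∈ p.support) ∧ (∀ x ∈ p₂.support, x ∈ p.support) ∧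
      (∀ e ∈ p₁.edges, e ∉ p₂.edges)
  | _, _, nil, _, u, hu => by
    rcases List.mem_singleton.mp hu with rfl
    exact ⟨nil, nil, fun _ he => he, fun _ he => he, fun _ hx => hx, fun _ hx => hx,
      fun e he => by simp [edges] at he⟩
  | a, _, cons e h t, hp, u, hu => by
    have hnd := List.nodup_cons.mp hp
    rcases List.mem_cons.mp hu with rfl | hu'
    · exact ⟨nil, cons e h t, fun e' he' => by simp [edges] at he', fun _ he => he,
        fun x hx => by rcases List.mem_singleton.mp hx with rfl; exact List.mem_cons_self,
        fun _ hx => hx, fun e' he' => by simp [edges] at he'⟩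
    · obtain ⟨t₁, t₂, h1, h2, h3, h4, h5⟩ := exists_split t hnd.2 u hu'
      refine ⟨cons e h t₁, t₂, ?_, ?_, ?_, ?_, ?_⟩
      · intro e' he'
        rcases List.mem_cons.mp he' with rfl | he'
        · exact List.mem_cons_self
        · exact List.mem_cons_of_mem _ (h1 _ he')
      · exact fun e' he' => List.mem_cons_of_mem _ (h2 _ he')
      · intro x hx
        rcases List.mem_cons.mp hx with rfl | hx
        · exact List.mem_cons_self
        · exact List.mem_cons_of_mem _ (h3 _ hx)
      · exact fun x hx => List.mem_cons_of_mem _ (h4 _ hx)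
      · intro e' he'
        rcases List.mem_cons.mp he' with rfl | he'
        · intro he2
          exact hnd.1 (t.mem_support_of_mem_edges e' (h2 _ he2) a
            (by rw [h]; exact Sym2.mem_mk_left _ _))
        · exact h5 _ he'

lemma exists_firstHit : ∀ {a b : G.V} (p : G.Walk a b) (Q : G.V → Prop),
    (∃ x ∈ p.support, Q x) →
    ∃ (u : G.V) (q : G.Walk a u), Q u ∧ (∀ e ∈ q.edges, e ∈ p.edges) ∧
      (∀ x ∈ q.support, x ∈ p.support) ∧ (p.IsPath → q.IsPath) ∧
      (∀ x ∈ q.support, x ≠ u → ¬ Q x)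
  | a, _, nil, Q, hx => by
    obtain ⟨x, hx1, hx2⟩ := hx
    rcases List.mem_singleton.mp hx1 with rfl
    exact ⟨x, nil, hx2, fun _ he => he, fun _ hy => hy, fun h => h,
      fun y hy hne => absurd (List.mem_singleton.mp hy) hne⟩
  | a, _, cons e h t, Q, hx => by
    by_cases hQa : Q a
    · refine ⟨a, nil, hQa, fun e' he' => by simp [edges] at he', ?_, ?_, ?_⟩
      · intro y hy
        rcases List.mem_singleton.mp hy with rfl
        exact List.mem_cons_self
      · intro _; exact List.nodup_singleton a
      · intro y hy hne; exact absurd (List.mem_singleton.mp hy) hne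
    · obtain ⟨x, hx1, hx2⟩ := hx
      have hxt : x ∈ t.support := by
        rcases List.mem_cons.mp hx1 with rfl | h1
        · exact absurd hx2 hQa
        · exact h1
      obtain ⟨u, q, hu, hq1, hq2, hq3, hq4⟩ := exists_firstHit t Q ⟨x, hxt, hx2⟩
      refine ⟨u, cons e h q, hu, ?_, ?_, ?_, ?_⟩
      · intro e' he'
        rcases List.mem_cons.mp he' with rfl | he'
        · exact List.mem_cons_self
        · exact List.mem_cons_of_mem _ (hq1 _ he')
      · intro y hy
        rcases List.mem_cons.mp hy with rfl | hy
        · exact List.mem_cons_self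
        · exact List.mem_cons_of_mem _ (hq2 _ hy)
      · intro hp
        have hnd := List.nodup_cons.mp hp
        exact List.nodup_cons.mpr ⟨fun hmem => hnd.1 (hq2 _ hmem), hq3 hnd.2⟩
      · intro y hy hne
        rcases List.mem_cons.mp hy with rfl | hy
        · exact hQa
        · exact hq4 y hy hne

end Walk

lemma reachable_of_mem_support : ∀ {u v : G.V} (w : G.Walk u v), ∀ x ∈ w.support,
    G.Reachable u x
  | _, _, Walk.nil, x, hx => by
    rcases List.mem_singleton.mp hx with rfl
    exact ⟨Walk.nil⟩
  | _, _, Walk.cons e h t, x, hx => by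
    rcases List.mem_cons.mp hx with rfl | hx'
    · exact ⟨Walk.nil⟩
    · obtain ⟨w'⟩ := reachable_of_mem_support t x hx'
      exact ⟨Walk.cons e h w'⟩

lemma deleteEdges_walk {F : Set G.E} : ∀ {a b : G.V} (w : (G.deleteEdges F).Walk a b),
    ∃ w' : G.Walk a b, w'.support = w.support
  | _, _, Walk.nil => ⟨Walk.nil, rfl⟩
  | _, _, Walk.cons e h t => by
    obtain ⟨w', hw'⟩ := deleteEdges_walk t
    exact ⟨Walk.cons e.1 h w', by
      show _ :: w'.support = _ :: t.support
      rw [hw']; rfl⟩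

/-- The median construction: three edge-disjoint walks inside `S` to a common vertex. -/
lemma exists_median {S : Set G.V}
    (hS : ∀ a ∈ S, ∀ b ∈ S, ∃ w : G.Walk a b, ∀ x ∈ w.support, x ∈ S)
    {s₁ s₂ s₃ : G.V} (h1 : s₁ ∈ S) (h2 : s₂ ∈ S) (h3 : s₃ ∈ S) :
    ∃ (m : G.V) (q₁ : G.Walk s₁ m) (q₂ : G.Walk s₂ m) (q₃ : G.Walk s₃ m),
      m ∈ S ∧
      (∀ x ∈ q₁.support, x ∈ S) ∧ (∀ x ∈ q₂.support, x ∈ S) ∧ (∀ x ∈ q₃.support, x ∈ S) ∧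
      (∀ e ∈ q₁.edges, e ∉ q₂.edges) ∧ (∀ e ∈ q₁.edges, e ∉ q₃.edges) ∧
      (∀ e ∈ q₂.edges, e ∉ q₃.edges) := by
  obtain ⟨p₀, hp₀⟩ := hS s₂ h2 s₃ h3
  obtain ⟨p, hpPath, hpe, hps⟩ := p₀.exists_path
  have hpS : ∀ x ∈ p.support, x ∈ S := fun x hx => hp₀ x (hps x hx)
  obtain ⟨q₀, hq₀⟩ := hS s₁ h1 s₂ h2
  obtain ⟨q, _hqPath, hqe, hqs⟩ := q₀.exists_path
  have hqS : ∀ x ∈ q.support, x ∈ S := fun x hx => hq₀ x (hqs x hx)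
  obtain ⟨m, r, hmp, hre, hrs, _hrPath, hrfirst⟩ :=
    q.exists_firstHit (fun x => x ∈ p.support)
      ⟨s₂, q.end_mem_support, p.start_mem_support⟩
  obtain ⟨p₁, p₂, hp₁e, hp₂e, hp₁s, hp₂s, hdisj⟩ := p.exists_split hpPath m hmp
  have hrp : ∀ e ∈ r.edges, e ∉ p.edges := by
    intro e he hep
    have hends : ∀ x ∈ G.ends e, x = m := by
      intro x hx
      by_contra hne
      exact hrfirst x (r.mem_support_of_mem_edges e he x hx) hne
        (p.mem_support_of_mem_edges e hep x hx)
    apply G.loopless e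
    obtain ⟨y, z, hyz⟩ := sym2_exists (G.ends e)
    rw [hyz, hends y (by rw [hyz]; exact Sym2.mem_mk_left _ _),
      hends z (by rw [hyz]; exact Sym2.mem_mk_right _ _)]
    exact Sym2.mk_isDiag_iff.mpr rfl
  refine ⟨m, r, p₁, p₂.reverse, hpS m hmp,
    fun x hx => hqS x (hrs x hx),
    fun x hx => hpS x (hp₁s x hx),
    fun x hx => hpS x (hp₂s x (p₂.mem_support_reverse x hx)), ?_, ?_, ?_⟩
  · exact fun e he hee => hrp e he (hp₁e e hee)
  · intro e he hee
    rw [p₂.edges_reverse] at hee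
    exact hrp e he (hp₂e e (List.mem_reverse.mp hee))
  · intro e he hee
    rw [p₂.edges_reverse] at hee
    exact hdisj e he (List.mem_reverse.mp hee)

/-- Immersions compose. -/
lemma Immersion.trans {H K L : Multigraph} (h1 : Immersion H K) (h2 : Immersion K L) :
    Immersion H L := by
  obtain ⟨f, hf, P, hPpath, hPends, hPdisj⟩ := h1
  obtain ⟨g, hg, Q, hQpath, hQends, hQdisj⟩ := h2
  have lift : ∀ {x y : K.V} (t : K.Walk x y),
      ∃ r : L.Walk (g x) (g y), ∀ d ∈ r.edges, ∃ ε ∈ t.edges, d ∈ ((Q ε).2.2).edges := by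
    intro x y t
    induction t with
    | nil => exact ⟨Walk.nil, fun d hd => by simp [Walk.edges] at hd⟩
    | @cons x' v' w' ε hε t ih =>
      obtain ⟨r', hr'⟩ := ih
      have hend : s(g x', g v') = s((Q ε).1, (Q ε).2.1) := by
        rw [← hQends ε, hε, Sym2.map_pair_eq]
      rcases Sym2.eq_iff.mp hend with ⟨ha, hb⟩ | ⟨ha, hb⟩
      · refine ⟨((Q ε).2.2.copy ha.symm hb.symm).append r', ?_⟩
        intro d hd
        rw [Walk.edges_append] at hd
        rcases List.mem_append.mp hd with hd | hd
        · rw [Walk.copy_edges] at hd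
          exact ⟨ε, List.mem_cons_self, hd⟩
        · obtain ⟨ε', hε'1, hε'2⟩ := hr' d hd
          exact ⟨ε', List.mem_cons_of_mem _ hε'1, hε'2⟩
      · refine ⟨((Q ε).2.2.reverse.copy ha.symm hb.symm).append r', ?_⟩
        intro d hd
        rw [Walk.edges_append] at hd
        rcases List.mem_append.mp hd with hd | hd
        · rw [Walk.copy_edges, Walk.edges_reverse] at hd
          exact ⟨ε, List.mem_cons_self, List.mem_reverse.mp hd⟩
        · obtain ⟨ε', hε'1, hε'2⟩ := hr' d hd
          exact ⟨ε', List.mem_cons_of_mem _ hε'1, hε'2⟩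
  have hpe : ∀ e : H.E, ∃ r : L.Walk (g (P e).1) (g (P e).2.1),
      r.IsPath ∧ ∀ d ∈ r.edges, ∃ ε ∈ (P e).2.2.edges, d ∈ ((Q ε).2.2).edges := by
    intro e
    obtain ⟨r₀, hr₀⟩ := lift (P e).2.2
    obtain ⟨r, hrPath, hre, _⟩ := r₀.exists_path
    exact ⟨r, hrPath, fun d hd => hr₀ d (hre d hd)⟩
  choose R hR1 hR2 using hpe
  refine ⟨g ∘ f, hg.comp hf, fun e => ⟨g (P e).1, g (P e).2.1, R e⟩, hR1, ?_, ?_⟩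
  · intro e
    show (H.ends e).map (g ∘ f) = _
    rw [← Sym2.map_map, hPends e, Sym2.map_pair_eq]
  · intro e e' hne d hd hd'
    obtain ⟨ε, hε, hdε⟩ := hR2 e d hd
    obtain ⟨ε', hε', hdε'⟩ := hR2 e' d hd'
    by_cases hεε : ε = ε'
    · subst hεε
      exact hPdisj e e' hne ε hε hε'
    · exact hQdisj ε ε' hεε d hdε hdε'

end Multigraph

namespace Multigraph

variable {G : Multigraph}

/-- The boundary edges of a set `S` of vertices. -/
private abbrev CrossSub (G : Multigraph) (S : Set G.V) : Type :=
  {e : G.E // (∃ x ∈ G.ends e, x ∈ S) ∧ ¬ ∀ x ∈ G.ends e, x ∈ S}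

/-- If `S` is a nonempty internally connected set of vertices with at most `3`
boundary edges, then the contraction of `S` immerses in `G`. -/
lemma contract_immerses (S : Set G.V) (hne : S.Nonempty)
    (hconnS : ∀ a ∈ S, ∀ b ∈ S, ∃ w : G.Walk a b, ∀ x ∈ w.support, x ∈ S)
    (hcard : Nat.card (CrossSub G S) ≤ 3) :
    Immersion (G.contractSet S) G := by
  obtain ⟨w₀, hw₀⟩ := hne
  -- choose, for every boundary edge, its endpoints inside and outside `S`
  have hio : ∀ i : CrossSub G S, ∃ a b : G.V, G.ends i.1 = s(a, b) ∧ a ∉ S ∧ b ∈ S := by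
    rintro ⟨e, ⟨x, hx1, hx2⟩, hnall⟩
    obtain ⟨a, b, hab⟩ := sym2_exists (G.ends e)
    by_cases haS : a ∈ S
    · by_cases hbS : b ∈ S
      · refine absurd (fun y hy => ?_) hnall
        rw [hab] at hy
        rcases Sym2.mem_iff.mp hy with rfl | rfl <;> assumption
      · exact ⟨b, a, by rw [hab]; exact Sym2.eq_swap, hbS, haS⟩
    · have hbS : b ∈ S := by
        rw [hab] at hx1
        rcases Sym2.mem_iff.mp hx1 with rfl | rfl
        · exact absurd hx2 haS
        · exact hx2
      exact ⟨a, b, hab, haS, hbS⟩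
  choose out ent spec1 spec2 spec3 using hio
  -- an embedding of the boundary edges into `Fin 3`
  have hjex : Nonempty (CrossSub G S ↪ Fin 3) := by
    have : Fintype (CrossSub G S) := Fintype.ofFinite _
    rw [Function.Embedding.nonempty_iff_card_le, Fintype.card_fin]
    rw [← Nat.card_eq_fintype_card]
    exact hcard
  obtain ⟨j⟩ := hjex
  -- three points of `S` covering the entry points of the boundary edges
  let s' : Fin 3 → G.V := fun k =>
    if h : ∃ i : CrossSub G S, j i = k then ent h.choose else w₀
  have hs'S : ∀ k, s' k ∈ S := by
    intro k
    show (if h : ∃ i : CrossSub G S, j i = k then ent h.choose else w₀) ∈ S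
    by_cases h : ∃ i : CrossSub G S, j i = k
    · rw [dif_pos h]; exact spec3 _
    · rw [dif_neg h]; exact hw₀
  have hs'j : ∀ i : CrossSub G S, s' (j i) = ent i := by
    intro i
    have h : ∃ i' : CrossSub G S, j i' = j i := ⟨i, rfl⟩
    show (if h : ∃ i' : CrossSub G S, j i' = j i then ent h.choose else w₀) = ent i
    rw [dif_pos h, j.injective h.choose_spec]
  -- median: edge-disjoint connectors towards a common vertex `m ∈ S`
  obtain ⟨m, q1, q2, q3, hmS, hq1S, hq2S, hq3S, hd12, hd13, hd23⟩ :=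
    exists_median hconnS (hs'S 0) (hs'S 1) (hs'S 2)
  have hW : ∃ W : ∀ k : Fin 3, G.Walk (s' k) m,
      (∀ k, ∀ x ∈ (W k).support, x ∈ S) ∧
      (∀ k k', k ≠ k' → ∀ e ∈ (W k).edges, e ∉ (W k').edges) := by
    refine ⟨fun k => match k with
      | ⟨0, _⟩ => q1
      | ⟨1, _⟩ => q2
      | ⟨2, _⟩ => q3, ?_, ?_⟩
    · intro k
      match k with
      | ⟨0, _⟩ => exact hq1S
      | ⟨1, _⟩ => exact hq2S
      | ⟨2, _⟩ => exact hq3S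
    · intro k k' hkk'
      match k, k' with
      | ⟨0, _⟩, ⟨0, _⟩ => exact absurd rfl hkk'
      | ⟨0, _⟩, ⟨1, _⟩ => exact hd12
      | ⟨0, _⟩, ⟨2, _⟩ => exact hd13
      | ⟨1, _⟩, ⟨0, _⟩ => exact fun e he he' => hd12 e he' he
      | ⟨1, _⟩, ⟨1, _⟩ => exact absurd rfl hkk'
      | ⟨1, _⟩, ⟨2, _⟩ => exact hd23
      | ⟨2, _⟩, ⟨0, _⟩ => exact fun e he he' => hd13 e he' he
      | ⟨2, _⟩, ⟨1, _⟩ => exact fun e he he' => hd23 e he' he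
      | ⟨2, _⟩, ⟨2, _⟩ => exact absurd rfl hkk'
  obtain ⟨W, hWS, hWd⟩ := hW
  -- connectors indexed by boundary edges
  have hconn : ∃ conn : ∀ i : CrossSub G S, G.Walk (ent i) m,
      (∀ i, ∀ x ∈ (conn i).support, x ∈ S) ∧
      (∀ i i', i ≠ i' → ∀ e ∈ (conn i).edges, e ∉ (conn i').edges) := by
    refine ⟨fun i => (W (j i)).copy (hs'j i) rfl, ?_, ?_⟩
    · intro i x hx
      rw [Walk.copy_support] at hx
      exact hWS (j i) x hx
    · intro i i' hii' e he he'
      rw [Walk.copy_edges] at he he'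
      exact hWd (j i) (j i') (fun h => hii' (j.injective h)) e he he'
  obtain ⟨conn, hconnSupp, hconnDisj⟩ := hconn
  -- injectivity of the vertex map
  have hf₀ : Function.Injective
      (Sum.elim Subtype.val (fun _ => m) : {v : G.V // v ∉ S} ⊕ Unit → G.V) := by
    rintro (u | u) (u' | u') hxy <;> simp only [Sum.elim_inl, Sum.elim_inr] at hxy
    · exact congrArg Sum.inl (Subtype.ext hxy)
    · exact absurd (hxy.symm ▸ hmS) u.2
    · exact absurd (hxy ▸ hmS) u'.2
    · exact congrArg Sum.inr (Subsingleton.elim u u')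
  -- the path assigned to each edge of the contraction
  have hP : ∀ ε : (G.contractSet S).E, ∃ (a b : G.V) (wk : G.Walk a b), wk.IsPath ∧
      ((G.contractSet S).ends ε).map (Sum.elim Subtype.val (fun _ => m)) = s(a, b) ∧
      ∀ d ∈ wk.edges, d = ε.1 ∨
        ∃ hc : (∃ x ∈ G.ends ε.1, x ∈ S) ∧ ¬ ∀ x ∈ G.ends ε.1, x ∈ S,
          d ∈ (conn ⟨ε.1, hc⟩).edges := by
    intro ε
    by_cases hcross : ∃ x ∈ G.ends ε.1, x ∈ S
    · have hc : (∃ x ∈ G.ends ε.1, x ∈ S) ∧ ¬ ∀ x ∈ G.ends ε.1, x ∈ S := ⟨hcross, ε.2⟩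
      obtain ⟨wk, hwkPath, hwke, -⟩ :=
        (Walk.cons ε.1 (spec1 ⟨ε.1, hc⟩) (conn ⟨ε.1, hc⟩)).exists_path
      refine ⟨out ⟨ε.1, hc⟩, m, wk, hwkPath, ?_, ?_⟩
      · show ((G.ends ε.1).map _).map _ = _
        rw [Sym2.map_map, spec1 ⟨ε.1, hc⟩, Sym2.map_pair_eq]
        simp only [Function.comp_apply, dif_neg (spec2 ⟨ε.1, hc⟩),
          dif_pos (spec3 ⟨ε.1, hc⟩), Sum.elim_inl, Sum.elim_inr]
      · intro d hd
        rcases List.mem_cons.mp (hwke d hd) with rfl | hd'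
        · exact Or.inl rfl
        · exact Or.inr ⟨hc, hd'⟩
    · push_neg at hcross
      obtain ⟨a, b, hab⟩ := sym2_exists (G.ends ε.1)
      have haS : a ∉ S := hcross a (by rw [hab]; exact Sym2.mem_mk_left _ _)
      have hbS : b ∉ S := hcross b (by rw [hab]; exact Sym2.mem_mk_right _ _)
      have hne' : a ≠ b := fun hh =>
        G.loopless ε.1 (by rw [hab, hh]; exact Sym2.mk_isDiag_iff.mpr rfl)
      refine ⟨a, b, Walk.cons ε.1 hab Walk.nil, ?_, ?_, ?_⟩
      · exact List.nodup_cons.mpr ⟨fun hh => hne' (List.mem_singleton.mp hh),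
          List.nodup_singleton _⟩
      · show ((G.ends ε.1).map _).map _ = _
        rw [Sym2.map_map, hab, Sym2.map_pair_eq]
        simp only [Function.comp_apply, dif_neg haS, dif_neg hbS, Sum.elim_inl]
      · intro d hd
        exact Or.inl (List.mem_singleton.mp hd)
  choose A B wk hwkPath hwkEnds hwkCover using hP
  refine ⟨Sum.elim Subtype.val (fun _ => m), hf₀, fun ε => ⟨A ε, B ε, wk ε⟩,
    hwkPath, hwkEnds, ?_⟩
  intro ε ε' hne' d hd hd'
  rcases hwkCover ε d hd with h1 | ⟨hc1, hd1⟩ <;>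
    rcases hwkCover ε' d hd' with h2 | ⟨hc2, hd2⟩
  · exact hne' (Subtype.ext (h1.symm.trans h2))
  · refine ε.2 fun x hx => hconnSupp ⟨ε'.1, hc2⟩ x
      (Walk.mem_support_of_mem_edges _ d hd2 x ?_)
    rw [h1]; exact hx
  · refine ε'.2 fun x hx => hconnSupp ⟨ε.1, hc1⟩ x
      (Walk.mem_support_of_mem_edges _ d hd1 x ?_)
    rw [h2]; exact hx
  · have hne2 : (⟨ε.1, hc1⟩ : CrossSub G S) ≠ ⟨ε'.1, hc2⟩ :=
      fun hh => hne' (Subtype.ext (congrArg (fun z : CrossSub G S => z.1) hh))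
    exact hconnDisj _ _ hne2 d hd1 hd2

end Multigraph

namespace Multigraph

theorem statement1 (G : Multigraph) (hconn : G.Connected)
    (h5 : ¬ Immersion K5 G) (h33 : ¬ Immersion K33 G)
    (F : Set G.E) (hF : G.IsInternalEdgeCut F) (hcard : Nat.card ↥F ≤ 3) :
    ∀ v : G.V,
      ¬ Immersion K5 (G.contractSet {u : G.V | ¬ (G.deleteEdges F).Reachable u v}) ∧
      ¬ Immersion K33 (G.contractSet {u : G.V | ¬ (G.deleteEdges F).Reachable u v}) := by
  intro v
  set S : Set G.V := {u : G.V | ¬ (G.deleteEdges F).Reachable u v} with hSdef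
  obtain ⟨⟨hFne, hFcomp, hFlt⟩, hFeq⟩ := hF.1
  have hGone : G.numComponents = 1 := by
    have hsub : Subsingleton (Quotient G.reachSetoid) :=
      ⟨fun x y => Quotient.inductionOn₂ x y fun a b => Quotient.sound (hconn a b)⟩
    have hnonempty : Nonempty (Quotient G.reachSetoid) := ⟨Quotient.mk _ v⟩
    exact Nat.card_eq_one_iff_unique.mpr ⟨hsub, hnonempty⟩
  have h2 : (G.deleteEdges F).numComponents = 2 := by rw [hFeq, hGone]
  have hSne : S.Nonempty := by
    by_contra h
    have hall : ∀ u, (G.deleteEdges F).Reachable u v :=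
      fun u => not_not.mp (fun hn => h ⟨u, hn⟩)
    have hsub : Subsingleton (Quotient (G.deleteEdges F).reachSetoid) := by
      refine ⟨fun x y => Quotient.inductionOn₂ x y fun a b => Quotient.sound ?_⟩
      exact (G.deleteEdges F).reachSetoid.iseqv.trans (hall a)
        ((G.deleteEdges F).reachSetoid.iseqv.symm (hall b))
    have hone : (G.deleteEdges F).numComponents = 1 :=
      Nat.card_eq_one_iff_unique.mpr ⟨hsub, ⟨Quotient.mk _ v⟩⟩
    rw [h2] at hone
    exact absurd hone (by norm_num)
  have hreachS : ∀ a ∈ S, ∀ b ∈ S, (G.deleteEdges F).Reachable a b := by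
    intro a ha b hb
    by_contra hab
    have hinj : Function.Injective
        ![Quotient.mk (G.deleteEdges F).reachSetoid v,
          Quotient.mk (G.deleteEdges F).reachSetoid a,
          Quotient.mk (G.deleteEdges F).reachSetoid b] := by
      have hsymm := fun {x y : G.V} (hr : (G.deleteEdges F).Reachable x y) =>
        (G.deleteEdges F).reachSetoid.iseqv.symm hr
      intro k k' h
      fin_cases k <;> fin_cases k' <;>
        simp only [Matrix.cons_val_zero, Matrix.cons_val_one, Matrix.head_cons,
          Matrix.cons_val_two, Matrix.tail_cons, Fin.mk_zero, Fin.mk_one] at h ⊢ <;>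
        first
          | rfl
          | exact absurd (hsymm (Quotient.exact h)) ha
          | exact absurd (Quotient.exact h) ha
          | exact absurd (hsymm (Quotient.exact h)) hb
          | exact absurd (Quotient.exact h) hb
          | exact absurd (Quotient.exact h) hab
          | exact absurd (hsymm (Quotient.exact h)) hab
    have hle := Nat.card_le_card_of_injective _ hinj
    have h3 : (3 : ℕ) ≤ Nat.card (Quotient (G.deleteEdges F).reachSetoid) := by
      simpa using hle
    have hnc : (G.deleteEdges F).numComponents =
        Nat.card (Quotient (G.deleteEdges F).reachSetoid) := rfl
    omega
  have hconnS : ∀ a ∈ S, ∀ b ∈ S, ∃ w : G.Walk a b, ∀ x ∈ w.support, x ∈ S := by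
    intro a ha b hb
    obtain ⟨w⟩ := hreachS a ha b hb
    obtain ⟨w', hw'⟩ := deleteEdges_walk w
    refine ⟨w', fun x hx => ?_⟩
    rw [hw'] at hx
    have hax := reachable_of_mem_support w x hx
    intro hxv
    exact ha ((G.deleteEdges F).reachSetoid.iseqv.trans hax hxv)
  have hcrossF : ∀ e : G.E, (∃ x ∈ G.ends e, x ∈ S) → ¬(∀ x ∈ G.ends e, x ∈ S) → e ∈ F := by
    rintro e ⟨x, hx1, hx2⟩ hnall
    by_contra heF
    push_neg at hnall
    obtain ⟨y, hy1, hy2⟩ := hnall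
    obtain ⟨a, b, hab⟩ := sym2_exists (G.ends e)
    have hxy : G.ends e = s(x, y) := by
      rw [hab] at hx1 hy1 ⊢
      rcases Sym2.mem_iff.mp hx1 with rfl | rfl <;> rcases Sym2.mem_iff.mp hy1 with rfl | rfl
      · exact absurd hx2 hy2
      · rfl
      · exact Sym2.eq_swap
      · exact absurd hx2 hy2
    have hreach : (G.deleteEdges F).Reachable x y :=
      ⟨Walk.cons (⟨e, heF⟩ : {e : G.E // e ∉ F}) hxy Walk.nil⟩
    exact hx2 ((G.deleteEdges F).reachSetoid.iseqv.trans hreach (not_not.mp hy2))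
  have hcardCross : Nat.card (CrossSub G S) ≤ 3 := by
    refine le_trans (Nat.card_le_card_of_injective
      (fun i => (⟨i.1, hcrossF i.1 i.2.1 i.2.2⟩ : ↥F)) ?_) hcard
    intro i i' h
    exact Subtype.ext (congrArg (fun z : ↥F => z.1) h)
  have himm := contract_immerses S hSne hconnS hcardCross
  exact ⟨fun h => h5 (Immersion.trans h himm), fun h => h33 (Immersion.trans h himm)⟩


end Multigraph
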